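/- Let ψ : ℝ^n → ℝ^{2n-1} be the map ψ(v₁,…,v_{n-1}, y) = (v₁,…,v_{n-1}, y², v₁y, …, v_{n-1}y), and fix indices i, j with 1 ≤ i, j ≤ n-1. Then the vector field η on ℝ^{2n-1} with η_{V_j} = V_i, η_{X_j} = X_i, and all other components zero, is liftable over ψ, with lift ξ having source components ξ_{v_j} = v_i and all others zero. -/

import Mathlib

/-- For ψ(v,y) = (v, y², v₁y,…,v_{n-1}y) and fixed indices i, j, the vector
field η with η_{V_j} = V_i, η_{X_j} = X_i (all other components zero) is
liftable over ψ with lift ξ whose only nonzero component is ξ_{v_j} = v_i. -/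
theorem stmt8 (n : ℕ) (hn : 1 ≤ n) (i j : Fin (n - 1)) :
    ∀ p : (Fin (n - 1) → ℝ) × ℝ,
      fderiv ℝ
          (fun q : (Fin (n - 1) → ℝ) × ℝ =>
            ((q.1, q.2 ^ 2, fun m => q.1 m * q.2) :
              (Fin (n - 1) → ℝ) × ℝ × (Fin (n - 1) → ℝ)))
          p (Pi.single j (p.1 i), (0 : ℝ))
        = (Pi.single j (p.1 i), (0 : ℝ), Pi.single j (p.1 i * p.2)) := by
  intro p
  have h1 : HasFDerivAt (fun q : (Fin (n - 1) → ℝ) × ℝ => q.1)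
      (ContinuousLinearMap.fst ℝ _ _) p := hasFDerivAt_fst
  have h2 : HasFDerivAt (fun q : (Fin (n - 1) → ℝ) × ℝ => q.2 ^ 2)
      ((↑2 * p.2 ^ (2-1)) • (ContinuousLinearMap.snd ℝ _ _)) p :=
    (hasDerivAt_pow 2 p.2).comp_hasFDerivAt p hasFDerivAt_snd
  have h3 : HasFDerivAt (fun q : (Fin (n - 1) → ℝ) × ℝ => (fun m => q.1 m * q.2))
      (ContinuousLinearMap.pi fun m =>
        p.2 • ((ContinuousLinearMap.proj (R := ℝ) (φ := fun _ : Fin (n - 1) => ℝ) m).comp (ContinuousLinearMap.fst ℝ (Fin (n - 1) → ℝ) ℝ))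
          + p.1 m • ContinuousLinearMap.snd ℝ _ _) p := by
    apply hasFDerivAt_pi.2
    intro m
    have ha : HasFDerivAt (fun q : (Fin (n - 1) → ℝ) × ℝ => q.1 m)
        ((ContinuousLinearMap.proj (R := ℝ) (φ := fun _ : Fin (n - 1) => ℝ) m).comp (ContinuousLinearMap.fst ℝ (Fin (n - 1) → ℝ) ℝ)) p :=
      hasFDerivAt_pi'.1 h1 m
    have hm := ha.mul (hasFDerivAt_snd (p := p))
    rwa [add_comm] at hm
  have h := (h1.prodMk (h2.prodMk h3)).fderiv
  rw [h]
  ext x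
  · simp
  · simp
  · simp [Pi.single_apply, mul_comm]
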